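/- Let a,b,c,d,e,f,h,i,j,p be complex numbers satisfying ad+be+cf+1 = b^2+d^2+p^2, ap+bf+ci = bc+dp+ph, and ha+ib+jc+1 = h^2+c^2+p^2. Let F_0,...,F_9 and G_0,...,G_9 satisfy the domain-4 Fibonacci relations (F_4 = F_0+aF_1+bF_2+cF_3, F_7 = F_0+dF_1+eF_2+fF_3, F_9 = F_0+hF_1+iF_2+jF_3, F_5 = bF_1+dF_2+pF_3, F_6 = cF_1+pF_2+hF_3, F_8 = pF_1+fF_2+iF_3; same for G). Define H_0 = F_0G_0+F_1G_1+F_2G_2+F_3G_3, H_1 = F_0G_1+F_1G_4+F_2G_5+F_3G_6, H_2 = F_0G_2+F_1G_5+F_2G_7+F_3G_8, H_3 = F_0G_3+F_1G_6+F_2G_8+F_3G_9, H_4 = F_1G_1+F_4G_4+F_5G_5+F_6G_6. Then H_4 = H_0 + aH_1 + bH_2 + cH_3. -/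
import Mathlib


theorem stmt_8 (a b c d e f h i j p : ℂ)
    (e1 : a*d + b*e + c*f + 1 = b^2 + d^2 + p^2)
    (r1 : a*p + b*f + c*i = b*c + d*p + p*h)
    (e3 : h*a + i*b + j*c + 1 = h^2 + c^2 + p^2)
    (F0 F1 F2 F3 F4 F5 F6 F7 F8 F9 G0 G1 G2 G3 G4 G5 G6 G7 G8 G9 : ℂ)
    (hF4 : F4 = F0 + a*F1 + b*F2 + c*F3)
    (hF7 : F7 = F0 + d*F1 + e*F2 + f*F3)
    (hF9 : F9 = F0 + h*F1 + i*F2 + j*F3)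
    (hF5 : F5 = b*F1 + d*F2 + p*F3)
    (hF6 : F6 = c*F1 + p*F2 + h*F3)
    (hF8 : F8 = p*F1 + f*F2 + i*F3)
    (hG4 : G4 = G0 + a*G1 + b*G2 + c*G3)
    (hG7 : G7 = G0 + d*G1 + e*G2 + f*G3)
    (hG9 : G9 = G0 + h*G1 + i*G2 + j*G3)
    (hG5 : G5 = b*G1 + d*G2 + p*G3)
    (hG6 : G6 = c*G1 + p*G2 + h*G3)
    (hG8 : G8 = p*G1 + f*G2 + i*G3)
    (H0 H1 H2 H3 H4 : ℂ)
    (hH0 : H0 = F0*G0 + F1*G1 + F2*G2 + F3*G3)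
    (hH1 : H1 = F0*G1 + F1*G4 + F2*G5 + F3*G6)
    (hH2 : H2 = F0*G2 + F1*G5 + F2*G7 + F3*G8)
    (hH3 : H3 = F0*G3 + F1*G6 + F2*G8 + F3*G9)
    (hH4 : H4 = F1*G1 + F4*G4 + F5*G5 + F6*G6) :
    H4 = H0 + a*H1 + b*H2 + c*H3 := by
  subst hH0 hH1 hH2 hH3 hH4 hF4 hF5 hF6 hF7 hF8 hF9 hG4 hG5 hG6 hG7 hG8 hG9
  linear_combination (-F2*G2)*e1 + (-(F2*G3+F3*G2))*r1 + (-F3*G3)*e3
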